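/- arXiv:1701.07092 — 2 statements merged into one kernel-verified Lean document; each statement's English description precedes it below -/
import Mathlib

section
/- Let $b,c$ be positive integers. For all positive integers $i,j$ with $j \le i$: $\sum_{s=j}^{i} A(b,c,i,s)\cdot (-1)^{s-j}\,\frac{(s-1)!\,(b+j-1)!\,(c+s-j-1)!}{(c-1)!\,(j-1)!\,(b+s-1)!\,(s-j)!} = \delta_{i,j}$, where $\delta_{i,j}$ is $1$ if $i = j$ and $0$ otherwise. -/
/-- The binomial coefficient for integer arguments, over ℚ:
`n!/((n-k)! k!)` if `0 ≤ k ≤ n`, and `0` otherwise. -/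
noncomputable def ibinom (n k : ℤ) : ℚ :=
  if 0 ≤ k ∧ k ≤ n then
    (Nat.factorial n.toNat : ℚ) / (Nat.factorial (n - k).toNat * Nat.factorial k.toNat)
  else 0

/-- The entry `A(b,c,i,j)` of the lower-triangular factor. -/
noncomputable def Afun (b c i j : ℕ) : ℚ :=
  if j ≤ i ∧ i ≤ c + j then
    (Nat.factorial c * Nat.factorial (i - 1) * Nat.factorial (b + j - 1) : ℚ) /
      (Nat.factorial (j - 1) * Nat.factorial (b + i - 1) * Nat.factorial (i - j) *
        Nat.factorial (c + j - i))
  else 0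

/-- The entry `C(b,c,i,j)` of the upper-triangular factor. -/
noncomputable def Cfun (b c i j : ℕ) : ℚ :=
  if i ≤ j ∧ j ≤ b + i then
    (Nat.factorial b * Nat.factorial (j - 1) * Nat.factorial (b + c + i - 1) : ℚ) /
      (Nat.factorial (b + i - 1) * Nat.factorial (c + j - 1) * Nat.factorial (j - i) *
        Nat.factorial (b + i - j))
  else 0

/-- The entry `D(i)` (last column of the upper-triangular factor), in the
integer parameters `n, m`. -/
noncomputable def Dfun (b c : ℕ) (n m : ℤ) (i : ℕ) : ℚ :=
  ∑ v ∈ Finset.Icc 1 i, (-1 : ℚ) ^ (i - v) *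
    ((Nat.factorial (i - 1) * Nat.factorial (b + v - 1) * Nat.factorial (c + i - v - 1) : ℚ) /
      (Nat.factorial (c - 1) * Nat.factorial (v - 1) * Nat.factorial (b + i - 1) *
        Nat.factorial (i - v))) * ibinom n (m - v)

/-- The entry `B(j)` (last row of the lower-triangular factor), in the
integer parameters `n', m'`. -/
noncomputable def Bfun (b c : ℕ) (n' m' : ℤ) (j : ℕ) : ℚ :=
  ∑ v ∈ Finset.Icc 1 j, (-1 : ℚ) ^ (j - v) *
    ((Nat.factorial (b + j - 1) * Nat.factorial (c + v - 1) * Nat.factorial (b + j - v - 1) : ℚ) /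
      (Nat.factorial (b - 1) * Nat.factorial (v - 1) * Nat.factorial (j - v) *
        Nat.factorial (b + c + j - 1))) * ibinom n' (v - m')

/-- MacMahon's product formula for the number of rhombus tilings of the
semi-regular hexagon with side lengths `a, b, c`. -/
noncomputable def macmahon (a b c : ℕ) : ℚ :=
  ∏ i ∈ Finset.Icc 1 a, ∏ j ∈ Finset.Icc 1 b, ∏ k ∈ Finset.Icc 1 c,
    (((i : ℚ) + j + k - 1) / ((i : ℚ) + j + k - 2))

open Finset

lemma keyB (d : ℕ) (hd : 1 ≤ d) (c : ℕ) (hc : 1 ≤ c) :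
    ∑ u ∈ range (c+1), (-1:ℚ)^u * (c.choose u) * ((c+d-1-u).choose (c-1)) = 0 := by
  induction c, hc using Nat.le_induction with
  | base =>
    simp [Finset.sum_range_succ]
  | succ c hc ih =>
    have step : ∑ u ∈ range (c+1+1), (-1:ℚ)^u * ((c+1).choose u) * ((c+1+d-1-u).choose (c+1-1))
        = ∑ u ∈ range (c+1), (-1:ℚ)^u * (c.choose u) *
            (((c+1+d-1-u).choose c : ℚ) - ((c+1+d-1-(u+1)).choose c : ℚ)) := by
      rw [Finset.sum_range_succ'
        (fun u => (-1:ℚ)^u * ((c+1).choose u) * ((c+1+d-1-u).choose (c+1-1)))]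
      have reshape : ∀ u ∈ range (c+1),
          (-1:ℚ)^(u+1) * ((c+1).choose (u+1)) * ((c+1+d-1-(u+1)).choose (c+1-1))
          = (-1:ℚ)^(u+1) * (c.choose u) * ((c+1+d-1-(u+1)).choose c)
            + (-1:ℚ)^(u+1) * (c.choose (u+1)) * ((c+1+d-1-(u+1)).choose c) := by
        intro u hu
        rw [Nat.choose_succ_succ c u]
        push_cast
        ring
      rw [Finset.sum_congr rfl reshape, Finset.sum_add_distrib]
      -- second sum: shift back
      have shift : ∑ u ∈ range (c+1), (-1:ℚ)^(u+1) * (c.choose (u+1)) * ((c+1+d-1-(u+1)).choose c)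
          = (∑ u ∈ range (c+1+1), (-1:ℚ)^u * (c.choose u) * ((c+1+d-1-u).choose c))
            - (-1:ℚ)^0 * (c.choose 0) * ((c+1+d-1-0).choose c) := by
        rw [Finset.sum_range_succ' (fun u => (-1:ℚ)^u * (c.choose u) * ((c+1+d-1-u).choose c))]
        ring
      rw [shift]
      have last : ∑ u ∈ range (c+1+1), (-1:ℚ)^u * (c.choose u) * ((c+1+d-1-u).choose c)
          = ∑ u ∈ range (c+1), (-1:ℚ)^u * (c.choose u) * ((c+1+d-1-u).choose c) := by
        rw [Finset.sum_range_succ]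
        simp [Nat.choose_succ_self]
      rw [last]
      simp only [Nat.add_sub_cancel, Nat.choose_zero_right, pow_zero, Nat.cast_one, one_mul,
        Nat.sub_zero]
      have cancel : ∀ (A B K : ℚ), A + (B - K) + K = A + B := by intros; ring
      rw [cancel, ← Finset.sum_add_distrib]
      apply Finset.sum_congr rfl
      intro u hu
      push_cast
      ring
    rw [step]
    have inner : ∀ u ∈ range (c+1),
        (-1:ℚ)^u * (c.choose u) * (((c+1+d-1-u).choose c : ℚ) - ((c+1+d-1-(u+1)).choose c : ℚ))
        = (-1:ℚ)^u * (c.choose u) * ((c+d-1-u).choose (c-1)) := by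
      intro u hu
      simp only [mem_range] at hu
      have h1 : c+1+d-1-u = (c+d-1-u) + 1 := by omega
      have h2 : c+1+d-1-(u+1) = c+d-1-u := by omega
      have h3 : c = (c-1) + 1 := by omega
      have pas := Nat.choose_succ_succ' (c+d-1-u) (c-1)
      rw [← h3] at pas
      rw [h1, h2, pas]
      push_cast
      ring
    rw [Finset.sum_congr rfl inner, ih]

lemma keyB' (c d : ℕ) (hc : 1 ≤ c) (hd : 1 ≤ d) :
    ∑ t ∈ range (d+1), (-1:ℚ)^t * ((c-1+t).choose t) * (c.choose (d-t)) = 0 := by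
  have refl := Finset.sum_range_reflect
    (fun t => (-1:ℚ)^t * ((c-1+t).choose t) * (c.choose (d-t))) (d+1)
  rw [← refl]
  have g : ∀ u : ℕ, u ∈ range (d+1) →
      (-1:ℚ)^(d+1-1-u) * ((c-1+(d+1-1-u)).choose (d+1-1-u)) * (c.choose (d-(d+1-1-u)))
      = (-1:ℚ)^d * ((-1:ℚ)^u * (c.choose u) * ((c+d-1-u).choose (c-1))) := by
    intro u hu
    simp only [mem_range] at hu
    have hud : u ≤ d := by omega
    have e0 : d+1-1-u = d-u := by omega
    have e1 : d - (d-u) = u := by omega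
    have e2 : c-1+(d-u) = c+d-1-u := by omega
    have sgn : (-1:ℚ)^(d-u) = (-1)^d * (-1)^u := by
      have h := pow_add (-1:ℚ) (d-u) u
      rw [Nat.sub_add_cancel hud] at h
      have sq : ((-1:ℚ)^u) * ((-1:ℚ)^u) = 1 := by
        rw [← pow_add, ← two_mul, pow_mul]; norm_num
      rw [h, mul_assoc, sq, mul_one]
    have sym : (c+d-1-u).choose (d-u) = (c+d-1-u).choose (c-1) := by
      rw [← e2]
      have := Nat.choose_symm (show (d-u) ≤ c-1+(d-u) from Nat.le_add_left _ _)
      rw [Nat.add_sub_cancel] at this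
      rw [← this]
    rw [e0, e1, e2, sym, sgn]
    ring
  rw [Finset.sum_congr rfl g, ← Finset.mul_sum]
  have ext1 : ∑ u ∈ range (d+1), (-1:ℚ)^u * (c.choose u) * ((c+d-1-u).choose (c-1))
      = ∑ u ∈ range (c+d+1), (-1:ℚ)^u * (c.choose u) * ((c+d-1-u).choose (c-1)) := by
    apply Finset.sum_subset
    · exact Finset.range_subset_range.mpr (by omega)
    · intro u hu hnu
      simp only [mem_range] at hu hnu
      have hdu : d < u := by omega
      by_cases hcu : c < u
      · rw [Nat.choose_eq_zero_of_lt hcu]; simp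
      · rw [Nat.choose_eq_zero_of_lt (show c+d-1-u < c-1 by omega)]; simp
  have ext2 : ∑ u ∈ range (c+1), (-1:ℚ)^u * (c.choose u) * ((c+d-1-u).choose (c-1))
      = ∑ u ∈ range (c+d+1), (-1:ℚ)^u * (c.choose u) * ((c+d-1-u).choose (c-1)) := by
    apply Finset.sum_subset
    · exact Finset.range_subset_range.mpr (by omega)
    · intro u hu hnu
      simp only [mem_range] at hu hnu
      rw [Nat.choose_eq_zero_of_lt (show c < u by omega)]; simp
  rw [ext1, ← ext2, keyB d hd c hc, mul_zero]

lemma fq (n : ℕ) : (Nat.factorial n : ℚ) ≠ 0 :=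
  Nat.cast_ne_zero.mpr (Nat.factorial_ne_zero n)

lemma term_eq (b c i j s : ℕ) (hc : 0 < c) (hj : 0 < j) (hjs : j ≤ s) (hsi : s ≤ i) :
    Afun b c i s * ((-1:ℚ)^(s-j) *
      ((Nat.factorial (s-1) * Nat.factorial (b+j-1) * Nat.factorial (c+s-j-1) : ℚ) /
        (Nat.factorial (c-1) * Nat.factorial (j-1) * Nat.factorial (b+s-1) *
          Nat.factorial (s-j))))
    = ((Nat.factorial (i-1) * Nat.factorial (b+j-1) : ℚ) /
        (Nat.factorial (b+i-1) * Nat.factorial (j-1))) *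
      ((-1:ℚ)^(s-j) * (((c-1+(s-j)).choose (s-j) : ℕ) : ℚ) * ((c.choose (i-s) : ℕ) : ℚ)) := by
  unfold Afun
  by_cases h : i ≤ c + s
  · rw [if_pos ⟨hsi, h⟩]
    rw [Nat.cast_choose ℚ (show (s-j) ≤ c-1+(s-j) from Nat.le_add_left _ _),
      Nat.cast_choose ℚ (show i-s ≤ c by omega)]
    rw [show (c-1+(s-j)) - (s-j) = c-1 by omega]
    rw [show c - (i-s) = c+s-i by omega]
    rw [show c+s-j-1 = c-1+(s-j) by omega]
    field_simp
  · rw [if_neg (by tauto)]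
    rw [Nat.choose_eq_zero_of_lt (show c < i-s by omega)]
    simp


/-- the displayed signed factorial coefficients form the inverse
of the lower-triangular matrix `(A(b,c,i,j))`. -/
theorem statement_11 (b c : ℕ) (hb : 0 < b) (hc : 0 < c) (i j : ℕ) (hi : 0 < i) (hj : 0 < j)
    (hji : j ≤ i) :
    ∑ s ∈ Finset.Icc j i, Afun b c i s *
        ((-1 : ℚ) ^ (s - j) *
          ((Nat.factorial (s - 1) * Nat.factorial (b + j - 1) * Nat.factorial (c + s - j - 1) : ℚ) /
            (Nat.factorial (c - 1) * Nat.factorial (j - 1) * Nat.factorial (b + s - 1) *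
              Nat.factorial (s - j))))
      = if i = j then 1 else 0 := by
  by_cases hij : i = j
  · subst hij
    rw [if_pos rfl, Finset.Icc_self, Finset.sum_singleton]
    unfold Afun
    rw [if_pos ⟨le_refl i, by omega⟩]
    rw [show i - i = 0 by omega, show c + i - i = c by omega]
    simp only [Nat.factorial_zero, pow_zero, Nat.cast_one]
    field_simp
  · rw [if_neg hij]
    have hd : 1 ≤ i - j := by omega
    have tr : ∀ s ∈ Finset.Icc j i, Afun b c i s *
        ((-1 : ℚ) ^ (s - j) *
          ((Nat.factorial (s - 1) * Nat.factorial (b + j - 1) * Nat.factorial (c + s - j - 1) : ℚ) /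
            (Nat.factorial (c - 1) * Nat.factorial (j - 1) * Nat.factorial (b + s - 1) *
              Nat.factorial (s - j))))
        = ((Nat.factorial (i-1) * Nat.factorial (b+j-1) : ℚ) /
            (Nat.factorial (b+i-1) * Nat.factorial (j-1))) *
          ((-1:ℚ)^(s-j) * (((c-1+(s-j)).choose (s-j) : ℕ) : ℚ) * ((c.choose (i-s) : ℕ) : ℚ)) := by
      intro s hs
      rw [Finset.mem_Icc] at hs
      exact term_eq b c i j s hc hj hs.1 hs.2
    rw [Finset.sum_congr rfl tr, ← Finset.mul_sum]
    have inner : ∑ s ∈ Finset.Icc j i,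
        (-1:ℚ)^(s-j) * (((c-1+(s-j)).choose (s-j) : ℕ) : ℚ) * ((c.choose (i-s) : ℕ) : ℚ) = 0 := by
      rw [← Finset.Ico_add_one_right_eq_Icc, Finset.sum_Ico_eq_sum_range]
      rw [show i + 1 - j = (i-j) + 1 by omega]
      have tr2 : ∀ t ∈ Finset.range ((i-j)+1),
          (-1:ℚ)^(j+t-j) * (((c-1+(j+t-j)).choose (j+t-j) : ℕ) : ℚ) * ((c.choose (i-(j+t)) : ℕ) : ℚ)
          = (-1:ℚ)^t * (((c-1+t).choose t : ℕ) : ℚ) * ((c.choose ((i-j)-t) : ℕ) : ℚ) := by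
        intro t ht
        rw [Finset.mem_range] at ht
        rw [show j + t - j = t by omega, show i - (j + t) = (i-j) - t by omega]
      rw [Finset.sum_congr rfl tr2]
      exact keyB' c (i-j) hc hd
    rw [inner, mul_zero]
end

section
/- Let $b,c$ be positive integers. For all positive integers $v,j$ with $v \le j$: $\sum_{s=v}^{j} (-1)^{s-v}\,\frac{(b+s-1)!\,(c+v-1)!\,(b+s-v-1)!}{(b-1)!\,(v-1)!\,(s-v)!\,(b+c+s-1)!}\cdot C(b,c,s,j) = \delta_{v,j}$, where $\delta_{v,j}$ is $1$ if $v = j$ and $0$ otherwise. -/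
open Polynomial Finset in
private lemma key (b m : ℕ) (hb : 1 ≤ b) (hm : 1 ≤ m) :
    ∑ t ∈ Finset.range (m+1), (-1:ℚ)^t * (m.choose t) * ((b+t-1).choose (m-1)) = 0 := by
  have hpoly : ∑ t ∈ Finset.range (m+1),
      Polynomial.C ((-1:ℚ)^t * (m.choose t)) * (X+1)^(b+t-1)
      = (X+1)^(b-1) * ((-X)^m) := by
    have hbt : ∀ t : ℕ, b + t - 1 = (b-1) + t := fun t => by omega
    calc ∑ t ∈ Finset.range (m+1), Polynomial.C ((-1:ℚ)^t * (m.choose t)) * (X+1)^(b+t-1)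
        = (X+1)^(b-1) * ∑ t ∈ Finset.range (m+1),
            (-(X+1))^t * 1^(m-t) * (m.choose t : ℚ[X]) := by
          rw [Finset.mul_sum]
          refine Finset.sum_congr rfl fun t _ => ?_
          rw [hbt t, pow_add]
          have hn : (-(X+1):ℚ[X])^t = (-1)^t * (X+1)^t := by rw [neg_pow]
          simp only [map_mul, map_pow, map_neg, map_one, Polynomial.C_eq_natCast, hn]
          ring
      _ = (X+1)^(b-1) * (-(X+1) + 1)^m := by rw [← add_pow]
      _ = (X+1)^(b-1) * (-X)^m := by ring_nf
  have h2 := congrArg (fun p : ℚ[X] => p.coeff (m-1)) hpoly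
  simp only [Polynomial.finset_sum_coeff, Polynomial.coeff_C_mul,
    Polynomial.coeff_X_add_one_pow] at h2
  rw [h2]
  have h3 : (X+1:ℚ[X])^(b-1) * ((-X)^m) = ((-1)^m * (X+1)^(b-1)) * X^m := by ring
  rw [h3, Polynomial.coeff_mul_X_pow', if_neg (by omega)]

private lemma fne (k : ℕ) : (Nat.factorial k : ℚ) ≠ 0 :=
  Nat.cast_ne_zero.mpr (Nat.factorial_ne_zero k)

/-- the displayed signed factorial coefficients form a left
inverse of the upper-triangular matrix `(C(b,c,i,j))`. -/
theorem statement_12 (b c : ℕ) (hb : 0 < b) (hc : 0 < c) (v j : ℕ) (hv : 0 < v) (hj : 0 < j)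
    (hvj : v ≤ j) :
    ∑ s ∈ Finset.Icc v j,
        ((-1 : ℚ) ^ (s - v) *
          ((Nat.factorial (b + s - 1) * Nat.factorial (c + v - 1) * Nat.factorial (b + s - v - 1) : ℚ) /
            (Nat.factorial (b - 1) * Nat.factorial (v - 1) * Nat.factorial (s - v) *
              Nat.factorial (b + c + s - 1)))) * Cfun b c s j
      = if v = j then 1 else 0 := by
  rcases eq_or_lt_of_le hvj with heq | hlt
  · subst heq
    rw [if_pos rfl, Finset.Icc_self, Finset.sum_singleton]
    rw [Cfun, if_pos ⟨le_refl v, by omega⟩]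
    rw [show v - v = 0 by omega, show b + v - v - 1 = b - 1 by omega,
      show b + v - v = b by omega]
    simp only [pow_zero, Nat.factorial_zero, Nat.cast_one]
    field_simp
  · rw [if_neg (by omega)]
    set m := j - v with hmdef
    have hm1 : 1 ≤ m := by omega
    rw [← Finset.Ico_add_one_right_eq_Icc, Finset.sum_Ico_eq_sum_range, show j + 1 - v = m + 1 by omega]
    set K : ℚ := (Nat.factorial b * Nat.factorial (j-1) * Nat.factorial (c+v-1) *
        Nat.factorial (m-1) : ℚ) /
      (Nat.factorial (b-1) * Nat.factorial (v-1) * Nat.factorial (c+j-1) *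
        Nat.factorial m) with hK
    calc ∑ t ∈ Finset.range (m+1),
          ((-1 : ℚ) ^ (v+t - v) *
          ((Nat.factorial (b + (v+t) - 1) * Nat.factorial (c + v - 1) * Nat.factorial (b + (v+t) - v - 1) : ℚ) /
            (Nat.factorial (b - 1) * Nat.factorial (v - 1) * Nat.factorial (v+t - v) *
              Nat.factorial (b + c + (v+t) - 1)))) * Cfun b c (v+t) j
        = ∑ t ∈ Finset.range (m+1),
            K * ((-1:ℚ)^t * (m.choose t) * ((b+t-1).choose (m-1))) := by
          refine Finset.sum_congr rfl fun t ht => ?_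
          rw [Finset.mem_range] at ht
          have htm : t ≤ m := by omega
          rw [show v + t - v = t by omega, show b + (v+t) - v - 1 = b + t - 1 by omega]
          by_cases hbt : m ≤ b + t
          · rw [Cfun, if_pos ⟨by omega, by omega⟩]
            rw [show j - (v+t) = m - t by omega, show b + (v+t) - j = b + t - m by omega]
            rw [Nat.cast_choose ℚ htm,
              Nat.cast_choose ℚ (show m - 1 ≤ b + t - 1 by omega),
              show b + t - 1 - (m - 1) = b + t - m by omega]
            rw [show b + (v + t) - 1 = b + v + t - 1 by omega,
              show b + c + (v + t) - 1 = b + c + v + t - 1 by omega]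
            rw [hK, div_mul_eq_mul_div, eq_div_iff
              (by exact mul_ne_zero (mul_ne_zero (mul_ne_zero (fne _) (fne _)) (fne _)) (fne _))]
            field_simp [fne]
          · rw [Cfun, if_neg (by omega), mul_zero,
              Nat.choose_eq_zero_of_lt (show b + t - 1 < m - 1 by omega), Nat.cast_zero,
              mul_zero, mul_zero]
      _ = 0 := by rw [← Finset.mul_sum, key b m hb hm1, mul_zero]
end
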